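/- Let α ∈ (0,1], let x ∈ (0,1) be irrational with convergents p_n/q_n, let y ∈ (−∞,−1), and let n ≥ 0. Then ‖𝐓^{n+1}(x,y)‖ < α if and only if the hyperbolic geodesic with endpoints x and y, i.e. the semicircle {z ∈ ℂ : Im z > 0, |z − (x+y)/2| = (x−y)/2}, intersects the open disc D_{p_n/q_n}(α) = {z ∈ ℂ : |z − (p_n/q_n + i·α/q_n²)| < α/q_n²} of radius α/q_n² tangent to ℝ at p_n/q_n. -/

import Mathlib

open Real MeasureTheory Filter Set
open scoped Classical

noncomputable section

/-- The Gauss map `T x = 1/x - ⌊1/x⌋`. -/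
def gaussMap (x : ℝ) : ℝ := 1/x - ⌊1/x⌋

/-- The natural extension `𝐓(x,y) = (1/x - ⌊1/x⌋, 1/y - ⌊1/x⌋)`. -/
def natExt (p : ℝ × ℝ) : ℝ × ℝ := (1/p.1 - ⌊1/p.1⌋, 1/p.2 - ⌊1/p.1⌋)

/-- `(x₀, y₀) = 𝐓(x, ∞) = (1/x - ⌊1/x⌋, -⌊1/x⌋)`. -/
def initPt (x : ℝ) : ℝ × ℝ := (1/x - ⌊1/x⌋, -(⌊1/x⌋ : ℝ))

/-- Partial quotient `a_n = ⌊1 / T^{n-1} x⌋` (indexed from 1). -/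
def cfA (x : ℝ) (n : ℕ) : ℤ := ⌊1 / (gaussMap^[n-1] x)⌋

/-- The pair `(p_n, q_n)` of numerator and denominator of the `n`-th convergent. -/
def pq (x : ℝ) : ℕ → ℤ × ℤ
  | 0 => (0, 1)
  | 1 => (1, ⌊1/x⌋)
  | n+2 => (cfA x (n+2) * (pq x (n+1)).1 + (pq x n).1,
            cfA x (n+2) * (pq x (n+1)).2 + (pq x n).2)

def pconv (x : ℝ) (n : ℕ) : ℤ := (pq x n).1
def qconv (x : ℝ) (n : ℕ) : ℤ := (pq x n).2

/-- `θ_n(x) = q_n |q_n x - p_n|`. -/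
def theta (x : ℝ) (n : ℕ) : ℝ := (qconv x n : ℝ) * |(qconv x n : ℝ) * x - (pconv x n : ℝ)|

/-- `Ω = (0,1) × (-∞,-1)`. -/
def Ωset : Set (ℝ × ℝ) := Set.Ioo (0:ℝ) 1 ×ˢ Set.Iio (-1 : ℝ)

/-- `Ω_α = {(x,y) ∈ Ω : 1/(x-y) < α}`. -/
def Ωα (α : ℝ) : Set (ℝ × ℝ) := {p ∈ Ωset | 1 / (p.1 - p.2) < α}

/-- First return time to `Ω_α` (defined as `sInf`, so `0` when undefined). -/
def tauα (α : ℝ) (p : ℝ × ℝ) : ℕ := sInf {n : ℕ | 1 ≤ n ∧ natExt^[n] p ∈ Ωα α}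

/-- First return map `𝐓_α`. -/
def retMap (α : ℝ) (p : ℝ × ℝ) : ℝ × ℝ := natExt^[tauα α p] p

/-- The invariant measure `μ` with density `(log 2)⁻¹ (x-y)⁻²` on `Ω`. -/
def μnat : Measure (ℝ × ℝ) :=
  (volume.restrict Ωset).withDensity
    (fun p => ENNReal.ofReal ((Real.log 2)⁻¹ * ((p.1 - p.2)⁻¹)^2))

/-- `c_α = (log 2 · μ(Ω_α))⁻¹`, explicitly. -/
def cα (α : ℝ) : ℝ := if 1/2 < α then (1 - α + Real.log 2 + Real.log α)⁻¹ else α⁻¹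

/-- The probability measure `μ_α` with density `c_α (x-y)⁻²` on `Ω_α`. -/
def μmeas (α : ℝ) : Measure (ℝ × ℝ) :=
  (volume.restrict (Ωα α)).withDensity
    (fun p => ENNReal.ofReal (cα α * ((p.1 - p.2)⁻¹)^2))

/-- `Ω_α⁻ = {(x,y) ∈ Ω : α < x, y < αx/(α-x)}`. -/
def Ωminus (α : ℝ) : Set (ℝ × ℝ) := {p ∈ Ωset | α < p.1 ∧ p.2 < α * p.1 / (α - p.1)}

-- AUXILIARY LEMMAS

lemma real_key {dd R r m : ℝ} (hR : 0 < R) (hr : 0 < r) (hm0 : 0 < m)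
    (hmr : r ≤ m) (hm2 : m^2 = dd^2 + r^2) :
    |m - R| < r ↔ |dd^2 - R^2| < 2*R*r := by
  rw [abs_lt, abs_lt]
  constructor
  · rintro ⟨h1, h2⟩
    constructor
    · nlinarith [mul_pos (show 0 < m - (R - r) by linarith) (show 0 < m + (R - r) by linarith)]
    · nlinarith [mul_pos (show 0 < R + r - m by linarith) (show 0 < R + r + m by linarith)]
  · rintro ⟨h1, h2⟩
    have q1 : (R - r)^2 < m^2 := by nlinarith
    have q2 : m^2 < (R + r)^2 := by nlinarith
    have q3 : R - r < m := lt_of_pow_lt_pow_left₀ 2 hm0.le q1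
    have q4 : m < R + r := lt_of_pow_lt_pow_left₀ 2 (by linarith) q2
    constructor <;> linarith

lemma geom (y x t r : ℝ) (hyx : y < x) (hr : 0 < r) :
    ({z : ℂ | 0 < z.im ∧ ‖z - (((x + y) / 2 : ℝ) : ℂ)‖ = (x - y) / 2} ∩
      {z : ℂ | ‖z - ((t : ℂ) + (r : ℂ) * Complex.I)‖ < r}).Nonempty ↔
    |(t - x) * (t - y)| < (x - y) * r := by
  set c : ℝ := (x + y) / 2 with hc
  set R : ℝ := (x - y) / 2 with hRdef
  have hR : 0 < R := by rw [hRdef]; linarith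
  set w : ℂ := (t : ℂ) + (r : ℂ) * Complex.I with hw
  set m : ℝ := ‖w - (c : ℂ)‖ with hm
  have hwre : (w - (c:ℂ)).re = t - c := by simp [hw]
  have hwim : (w - (c:ℂ)).im = r := by simp [hw]
  have hm2 : m^2 = (t - c)^2 + r^2 := by
    rw [hm, Complex.sq_norm, Complex.normSq_apply, hwre, hwim]; ring
  have hmr : r ≤ m := by
    calc r ≤ |r| := le_abs_self r
    _ = |(w - (c:ℂ)).im| := by rw [hwim]
    _ ≤ m := Complex.abs_im_le_norm _
  have hm0 : 0 < m := lt_of_lt_of_le hr hmr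
  have hd : (t - x) * (t - y) = (t - c)^2 - R^2 := by rw [hc, hRdef]; ring
  have key : |m - R| < r ↔ |(t - x) * (t - y)| < (x - y) * r := by
    rw [hd, show (x - y) * r = 2*R*r by rw [hRdef]; ring]
    exact real_key hR hr hm0 hmr hm2
  rw [← key]
  constructor
  · rintro ⟨z, ⟨hzim, hzc⟩, hzw⟩
    have hzw' : ‖z - w‖ < r := hzw
    have hzc' : ‖z - (c:ℂ)‖ = R := hzc
    have t1 : m ≤ ‖z - w‖ + R := by
      calc m = ‖w - (c:ℂ)‖ := hm
      _ ≤ ‖w - z‖ + ‖z - (c:ℂ)‖ := norm_sub_le_norm_sub_add_norm_sub _ _ _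
      _ = ‖z - w‖ + R := by rw [norm_sub_rev, hzc']
    have t2 : R ≤ ‖z - w‖ + m := by
      calc R = ‖z - (c:ℂ)‖ := hzc'.symm
      _ ≤ ‖z - w‖ + ‖w - (c:ℂ)‖ := norm_sub_le_norm_sub_add_norm_sub _ _ _
      _ = ‖z - w‖ + m := by rw [hm]
    rw [abs_lt]
    exact ⟨by linarith, by linarith⟩
  · intro h1
    refine ⟨(c:ℂ) + ((R/m : ℝ):ℂ) * (w - (c:ℂ)), ⟨?_, ?_⟩, ?_⟩
    · show 0 < ((c:ℂ) + ((R/m : ℝ):ℂ) * (w - (c:ℂ))).im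
      have him : ((c:ℂ) + ((R/m : ℝ):ℂ) * (w - (c:ℂ))).im = (R/m) * r := by
        simp [Complex.add_im, Complex.mul_im, hwim]
      rw [him]
      positivity
    · show ‖(c:ℂ) + ((R/m : ℝ):ℂ) * (w - (c:ℂ)) - (c:ℂ)‖ = R
      rw [add_sub_cancel_left, norm_mul, Complex.norm_real, Real.norm_eq_abs, ← hm,
        abs_of_nonneg (div_nonneg hR.le hm0.le)]
      field_simp
    · show ‖(c:ℂ) + ((R/m : ℝ):ℂ) * (w - (c:ℂ)) - w‖ < r
      have e : (c:ℂ) + ((R/m : ℝ):ℂ) * (w - (c:ℂ)) - w = (((R/m - 1 : ℝ)):ℂ) * (w - (c:ℂ)) := by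
        push_cast; ring
      have e2 : R/m - 1 = (R - m)/m := by field_simp
      rw [e, norm_mul, Complex.norm_real, Real.norm_eq_abs, ← hm, e2, abs_div, abs_of_pos hm0,
        div_mul_cancel₀ _ (ne_of_gt hm0), abs_sub_comm]
      exact h1

lemma gauss_step {t : ℝ} (hirr : Irrational t) (ht : t ∈ Set.Ioo (0:ℝ) 1) :
    Irrational (gaussMap t) ∧ gaussMap t ∈ Set.Ioo (0:ℝ) 1 := by
  have ht0 : (0:ℝ) < t := ht.1
  have hinv : Irrational (1/t) := by rw [one_div]; exact hirr.inv
  have hi : Irrational (gaussMap t) := hinv.sub_intCast ⌊1/t⌋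
  have hfr : gaussMap t = Int.fract (1/t) := rfl
  have h0 : 0 ≤ gaussMap t := by rw [hfr]; exact Int.fract_nonneg _
  have h1 : gaussMap t < 1 := by rw [hfr]; exact Int.fract_lt_one _
  have hne : gaussMap t ≠ 0 := by
    intro h
    exact hi.ne_int 0 (by simpa using h)
  exact ⟨hi, lt_of_le_of_ne h0 (Ne.symm hne), h1⟩

lemma iter_gauss {t : ℝ} (hirr : Irrational t) (ht : t ∈ Set.Ioo (0:ℝ) 1) (k : ℕ) :
    Irrational (gaussMap^[k] t) ∧ gaussMap^[k] t ∈ Set.Ioo (0:ℝ) 1 := by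
  induction k with
  | zero => exact ⟨hirr, ht⟩
  | succ k ih =>
      rw [Function.iterate_succ_apply']
      exact gauss_step ih.1 ih.2

lemma cfA_ge_one {t : ℝ} (hirr : Irrational t) (ht : t ∈ Set.Ioo (0:ℝ) 1) (k : ℕ) :
    1 ≤ cfA t (k+1) := by
  obtain ⟨-, h0, h1⟩ := iter_gauss hirr ht k
  have : (1:ℝ) ≤ 1 / gaussMap^[k] t := by rw [le_div_iff₀ h0]; linarith
  show (1:ℤ) ≤ ⌊1 / gaussMap^[k] t⌋
  exact Int.le_floor.mpr (by exact_mod_cast this)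

lemma pconv_zero (t : ℝ) : pconv t 0 = 0 := rfl
lemma qconv_zero (t : ℝ) : qconv t 0 = 1 := rfl
lemma pconv_one (t : ℝ) : pconv t 1 = 1 := rfl
lemma qconv_one (t : ℝ) : qconv t 1 = cfA t 1 := rfl
lemma pconv_succ2 (t : ℝ) (k : ℕ) :
    pconv t (k+2) = cfA t (k+2) * pconv t (k+1) + pconv t k := rfl
lemma qconv_succ2 (t : ℝ) (k : ℕ) :
    qconv t (k+2) = cfA t (k+2) * qconv t (k+1) + qconv t k := rfl

lemma pq_ge {t : ℝ} (hirr : Irrational t) (ht : t ∈ Set.Ioo (0:ℝ) 1) (k : ℕ) :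
    1 ≤ qconv t k ∧ 0 ≤ pconv t k := by
  have H : ∀ k : ℕ, (1 ≤ qconv t k ∧ 0 ≤ pconv t k) ∧
      (1 ≤ qconv t (k+1) ∧ 0 ≤ pconv t (k+1)) := by
    intro k
    induction k with
    | zero =>
        refine ⟨⟨le_refl _, le_refl _⟩, ?_, ?_⟩
        · rw [qconv_one]; exact cfA_ge_one hirr ht 0
        · rw [pconv_one]; norm_num
    | succ k ih =>
        refine ⟨ih.2, ?_, ?_⟩
        · rw [qconv_succ2]
          have ha := cfA_ge_one hirr ht (k+1)
          nlinarith [ih.1.1, ih.2.1]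
        · rw [pconv_succ2]
          have ha := cfA_ge_one hirr ht (k+1)
          nlinarith [ih.1.2, ih.2.2]
  exact (H k).1

lemma cross (t : ℝ) (k : ℕ) :
    pconv t (k+1) * qconv t k - qconv t (k+1) * pconv t k = (-1)^k := by
  induction k with
  | zero =>
      rw [pconv_one, qconv_zero, qconv_one, pconv_zero]
      ring
  | succ k ih =>
      rw [pconv_succ2, qconv_succ2]
      linear_combination (-1 : ℤ) * ih

lemma qx_ne {t : ℝ} (hirr : Irrational t) (ht : t ∈ Set.Ioo (0:ℝ) 1) (m : ℕ) :
    (qconv t m : ℝ) * t - (pconv t m : ℝ) ≠ 0 := by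
  have hq : (1:ℝ) ≤ (qconv t m : ℝ) := by exact_mod_cast (pq_ge hirr ht m).1
  have hq' : ((qconv t m : ℝ)) ≠ 0 := by linarith
  intro h
  refine hirr ⟨(pconv t m : ℚ) / (qconv t m : ℚ), ?_⟩
  push_cast
  rw [div_eq_iff hq']
  linarith

lemma qy_neg {t : ℝ} (hirr : Irrational t) (ht : t ∈ Set.Ioo (0:ℝ) 1)
    {u : ℝ} (hu : u < -1) (m : ℕ) :
    (qconv t m : ℝ) * u - (pconv t m : ℝ) < 0 := by
  have hq : (1:ℝ) ≤ (qconv t m : ℝ) := by exact_mod_cast (pq_ge hirr ht m).1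
  have hp : (0:ℝ) ≤ (pconv t m : ℝ) := by exact_mod_cast (pq_ge hirr ht m).2
  nlinarith

lemma natExt_fst (k : ℕ) (p : ℝ × ℝ) : (natExt^[k] p).1 = gaussMap^[k] p.1 := by
  induction k with
  | zero => rfl
  | succ k ih =>
      rw [Function.iterate_succ_apply', Function.iterate_succ_apply']
      show gaussMap ((natExt^[k] p).1) = _
      rw [ih]

lemma natExt_snd_lt {t u : ℝ} (hirr : Irrational t) (ht : t ∈ Set.Ioo (0:ℝ) 1)
    (hu : u < -1) (k : ℕ) : (natExt^[k] (t, u)).2 < -1 := by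
  induction k with
  | zero => exact hu
  | succ k ih =>
      rw [Function.iterate_succ_apply']
      have hfst : (natExt^[k] (t, u)).1 = gaussMap^[k] t := natExt_fst k (t, u)
      obtain ⟨-, h0, h1⟩ := iter_gauss hirr ht k
      have ha : (1:ℤ) ≤ ⌊1 / (natExt^[k] (t, u)).1⌋ := by
        rw [hfst]
        exact Int.le_floor.mpr (by rw [le_div_iff₀ h0]; push_cast; linarith)
      have ha' : (1:ℝ) ≤ (⌊1 / (natExt^[k] (t, u)).1⌋ : ℝ) := by exact_mod_cast ha
      show 1/(natExt^[k] (t, u)).2 - (⌊1 / (natExt^[k] (t, u)).1⌋ : ℝ) < -1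
      have hv : (natExt^[k] (t, u)).2 < 0 := by linarith
      have hv1 : 1/(natExt^[k] (t, u)).2 < 0 := div_neg_of_pos_of_neg one_pos hv
      have hv2 : -1 < 1/(natExt^[k] (t, u)).2 := by
        rw [lt_div_iff_of_neg hv]; linarith
      linarith

lemma step_alg (A B a : ℝ) (hA : A ≠ 0) (hB : B ≠ 0) :
    1 / (-B / A) - a = -(a * B + A) / B := by
  field_simp
  ring

lemma main_formula {t u : ℝ} (hirr : Irrational t) (ht : t ∈ Set.Ioo (0:ℝ) 1)
    (hu : u < -1) (k : ℕ) :
    natExt^[k+1] (t, u) =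
      (-((qconv t (k+1) : ℝ) * t - (pconv t (k+1) : ℝ)) / ((qconv t k : ℝ) * t - (pconv t k : ℝ)),
       -((qconv t (k+1) : ℝ) * u - (pconv t (k+1) : ℝ)) / ((qconv t k : ℝ) * u - (pconv t k : ℝ))) := by
  induction k with
  | zero =>
      rw [Function.iterate_one]
      have ht0 : t ≠ 0 := ne_of_gt ht.1
      have hu0 : u ≠ 0 := by intro h; rw [h] at hu; norm_num at hu
      have hfloor : cfA t 1 = ⌊1/t⌋ := rfl
      refine Prod.ext ?_ ?_ <;>
        simp only [natExt, zero_add, qconv_one, pconv_one, qconv_zero, pconv_zero, hfloor]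
      · push_cast
        field_simp
        ring
      · push_cast
        field_simp
        ring
  | succ k ih =>
      have hA : (qconv t k : ℝ) * t - (pconv t k : ℝ) ≠ 0 := qx_ne hirr ht k
      have hB : (qconv t (k+1) : ℝ) * t - (pconv t (k+1) : ℝ) ≠ 0 := qx_ne hirr ht (k+1)
      have hA' : (qconv t k : ℝ) * u - (pconv t k : ℝ) ≠ 0 := ne_of_lt (qy_neg hirr ht hu k)
      have hB' : (qconv t (k+1) : ℝ) * u - (pconv t (k+1) : ℝ) ≠ 0 :=
        ne_of_lt (qy_neg hirr ht hu (k+1))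
      have hufst : -((qconv t (k+1) : ℝ) * t - (pconv t (k+1) : ℝ)) /
          ((qconv t k : ℝ) * t - (pconv t k : ℝ)) = gaussMap^[k+1] t := by
        rw [← natExt_fst (k+1) (t, u), ih]
      have hfloor : ⌊1 / (-((qconv t (k+1) : ℝ) * t - (pconv t (k+1) : ℝ)) /
          ((qconv t k : ℝ) * t - (pconv t k : ℝ)))⌋ = cfA t (k+2) := by
        rw [hufst]; rfl
      rw [Function.iterate_succ_apply', ih]
      refine Prod.ext ?_ ?_ <;>
        simp only [natExt, hfloor, qconv_succ2, pconv_succ2]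
      · push_cast
        rw [step_alg _ _ _ hA hB]
        ring
      · push_cast
        rw [step_alg _ _ _ hA' hB']
        ring


/-- `‖𝐓^{n+1}(x,y)‖ < α` iff the geodesic semicircle with endpoints
`x` and `y` meets the open disc of radius `α/q_n²` tangent to `ℝ` at `p_n/q_n`. -/
theorem stmt_17 (α : ℝ) (hα : α ∈ Set.Ioc (0:ℝ) 1) (x : ℝ) (hirr : Irrational x)
    (hx : x ∈ Set.Ioo (0:ℝ) 1) (y : ℝ) (hy : y < -1) (n : ℕ) :
    1 / ((natExt^[n+1] (x, y)).1 - (natExt^[n+1] (x, y)).2) < α ↔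
      ({z : ℂ | 0 < z.im ∧ ‖z - (((x + y) / 2 : ℝ) : ℂ)‖ = (x - y) / 2} ∩
        {z : ℂ | ‖z -
            ((((pconv x n : ℝ) / (qconv x n : ℝ) : ℝ) : ℂ) +
              ((α / ((qconv x n : ℝ))^2 : ℝ) : ℂ) * Complex.I)‖ <
          α / ((qconv x n : ℝ))^2}).Nonempty := by
  obtain ⟨hα0, hα1⟩ := hα
  have hyx : y < x := by have := hx.1; linarith
  have hxy0 : 0 < x - y := by linarith
  have hQ1 : (1:ℝ) ≤ (qconv x n : ℝ) := by exact_mod_cast (pq_ge hirr hx n).1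
  have hQ0 : (0:ℝ) < (qconv x n : ℝ) := by linarith
  have hQsq : (0:ℝ) < ((qconv x n : ℝ))^2 := by positivity
  have hr : 0 < α / ((qconv x n : ℝ))^2 := by positivity
  rw [geom y x ((pconv x n : ℝ) / (qconv x n : ℝ)) (α / ((qconv x n : ℝ))^2) hyx hr]
  -- abbreviations
  have hA : (qconv x n : ℝ) * x - (pconv x n : ℝ) ≠ 0 := qx_ne hirr hx n
  have hA'neg : (qconv x n : ℝ) * y - (pconv x n : ℝ) < 0 := qy_neg hirr hx hy n
  have hA' : (qconv x n : ℝ) * y - (pconv x n : ℝ) ≠ 0 := ne_of_lt hA'neg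
  have hform := main_formula hirr hx hy n
  have hΔval : (natExt^[n+1] (x, y)).1 - (natExt^[n+1] (x, y)).2
      = -((qconv x (n+1) : ℝ) * x - (pconv x (n+1) : ℝ)) / ((qconv x n : ℝ) * x - (pconv x n : ℝ))
        - -((qconv x (n+1) : ℝ) * y - (pconv x (n+1) : ℝ)) / ((qconv x n : ℝ) * y - (pconv x n : ℝ)) := by
    rw [hform]
  have hfst : 0 < (natExt^[n+1] (x, y)).1 := by
    rw [natExt_fst]
    exact (iter_gauss hirr hx (n+1)).2.1
  have hsnd : (natExt^[n+1] (x, y)).2 < -1 := natExt_snd_lt hirr hx hy (n+1)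
  have hΔpos : 0 < -((qconv x (n+1) : ℝ) * x - (pconv x (n+1) : ℝ)) / ((qconv x n : ℝ) * x - (pconv x n : ℝ))
        - -((qconv x (n+1) : ℝ) * y - (pconv x (n+1) : ℝ)) / ((qconv x n : ℝ) * y - (pconv x n : ℝ)) := by
    rw [← hΔval]; linarith
  rw [hΔval]
  set Δ : ℝ := -((qconv x (n+1) : ℝ) * x - (pconv x (n+1) : ℝ)) / ((qconv x n : ℝ) * x - (pconv x n : ℝ))
        - -((qconv x (n+1) : ℝ) * y - (pconv x (n+1) : ℝ)) / ((qconv x n : ℝ) * y - (pconv x n : ℝ)) with hΔdef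
  have hcross : (pconv x (n+1) : ℝ) * (qconv x n : ℝ) - (qconv x (n+1) : ℝ) * (pconv x n : ℝ)
      = (-1 : ℝ)^n := by exact_mod_cast cross x n
  have hkey : Δ * (((qconv x n : ℝ) * x - (pconv x n : ℝ)) * ((qconv x n : ℝ) * y - (pconv x n : ℝ)))
      = (-1 : ℝ)^(n+1) * (x - y) := by
    have e1 : Δ * (((qconv x n : ℝ) * x - (pconv x n : ℝ)) * ((qconv x n : ℝ) * y - (pconv x n : ℝ)))
        = -(((qconv x (n+1) : ℝ) * x - (pconv x (n+1) : ℝ)) * ((qconv x n : ℝ) * y - (pconv x n : ℝ)))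
          + ((qconv x (n+1) : ℝ) * y - (pconv x (n+1) : ℝ)) * ((qconv x n : ℝ) * x - (pconv x n : ℝ)) := by
      rw [hΔdef]
      rw [div_sub_div _ _ hA hA', div_mul_eq_mul_div, div_eq_iff (mul_ne_zero hA hA')]
      ring
    rw [e1]
    linear_combination (-(x - y)) * hcross
  have habs : Δ * |((qconv x n : ℝ) * x - (pconv x n : ℝ)) * ((qconv x n : ℝ) * y - (pconv x n : ℝ))|
      = x - y := by
    have h1 : |Δ * (((qconv x n : ℝ) * x - (pconv x n : ℝ)) * ((qconv x n : ℝ) * y - (pconv x n : ℝ)))|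
        = |(-1 : ℝ)^(n+1) * (x - y)| := by rw [hkey]
    have h2 : |(-1 : ℝ)^(n+1) * (x - y)| = x - y := by
      rw [abs_mul, abs_pow, abs_neg, abs_one, one_pow, one_mul, abs_of_pos hxy0]
    have h3 : |Δ * (((qconv x n : ℝ) * x - (pconv x n : ℝ)) * ((qconv x n : ℝ) * y - (pconv x n : ℝ)))|
        = Δ * |((qconv x n : ℝ) * x - (pconv x n : ℝ)) * ((qconv x n : ℝ) * y - (pconv x n : ℝ))| := by
      rw [abs_mul, abs_of_pos hΔpos]
    rw [← h3, h1, h2]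
  have hAA' : 0 < |((qconv x n : ℝ) * x - (pconv x n : ℝ)) * ((qconv x n : ℝ) * y - (pconv x n : ℝ))| :=
    abs_pos.mpr (mul_ne_zero hA hA')
  have hts : |((pconv x n : ℝ) / (qconv x n : ℝ) - x) * ((pconv x n : ℝ) / (qconv x n : ℝ) - y)|
      = |((qconv x n : ℝ) * x - (pconv x n : ℝ)) * ((qconv x n : ℝ) * y - (pconv x n : ℝ))| / ((qconv x n : ℝ))^2 := by
    rw [show ((pconv x n : ℝ) / (qconv x n : ℝ) - x) * ((pconv x n : ℝ) / (qconv x n : ℝ) - y)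
        = (((qconv x n : ℝ) * x - (pconv x n : ℝ)) * ((qconv x n : ℝ) * y - (pconv x n : ℝ))) / ((qconv x n : ℝ))^2 from by
      field_simp; ring]
    rw [abs_div, abs_of_pos hQsq]
  rw [hts]
  have hsimp : (x - y) * (α / ((qconv x n : ℝ))^2) * ((qconv x n : ℝ))^2 = (x - y) * α := by
    field_simp
  rw [div_lt_iff₀ hQsq, hsimp]
  have h2 : α * (Δ * |((qconv x n : ℝ) * x - (pconv x n : ℝ)) * ((qconv x n : ℝ) * y - (pconv x n : ℝ))|)
      = α * (x - y) := by rw [habs]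
  constructor
  · intro h
    have h1 : 1 < α * Δ := (div_lt_iff₀ hΔpos).mp h
    nlinarith [mul_lt_mul_of_pos_right h1 hAA']
  · intro h
    rw [div_lt_iff₀ hΔpos]
    have h3 : 1 * |((qconv x n : ℝ) * x - (pconv x n : ℝ)) * ((qconv x n : ℝ) * y - (pconv x n : ℝ))|
        < (α * Δ) * |((qconv x n : ℝ) * x - (pconv x n : ℝ)) * ((qconv x n : ℝ) * y - (pconv x n : ℝ))| := by
      nlinarith
    exact lt_of_mul_lt_mul_right h3 hAA'.le
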